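/- For any a ∈ ℝ^n, let θ be drawn uniformly at random from {−1,+1}^n. Then the maximum, over all functions φ : {−1,+1}^n → [0,1] with E_θ[φ(θ)] = 1/2, of the quantity Σ_{i=1}^n a_i (E[φ(θ)·1[θ_i=+1]] − E[φ(θ)·1[θ_i=−1]]) − Σ_{i=1}^n a_i (E[(1−φ(θ))·1[θ_i=+1]] − E[(1−φ(θ))·1[θ_i=−1]]), equals the Khintchine constant K(a) = E_θ[|θ·a|]. -/

import Mathlib

open Finset

theorem khintchine_constant_as_lp
    {n : ℕ} (a : Fin n → ℝ) :
    IsGreatest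
      {v : ℝ | ∃ φ : (Fin n → Bool) → ℝ,
        (∀ θ, φ θ ∈ Set.Icc (0 : ℝ) 1) ∧
        (1 / 2 ^ n : ℝ) * (∑ θ : Fin n → Bool, φ θ) = 1 / 2 ∧
        v = (∑ i, a i *
              ((1 / 2 ^ n : ℝ) * (∑ θ : Fin n → Bool, φ θ * (if θ i then 1 else 0))
               - (1 / 2 ^ n : ℝ) * (∑ θ : Fin n → Bool, φ θ * (if θ i then 0 else 1))))
          - (∑ i, a i *
              ((1 / 2 ^ n : ℝ) * (∑ θ : Fin n → Bool, (1 - φ θ) * (if θ i then 1 else 0))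
               - (1 / 2 ^ n : ℝ) * (∑ θ : Fin n → Bool, (1 - φ θ) * (if θ i then 0 else 1))))}
      ((1 / 2 ^ n : ℝ) * ∑ θ : Fin n → Bool, |∑ i, (if θ i then (1 : ℝ) else -1) * a i|) := by
  set s : (Fin n → Bool) → ℝ := fun θ => ∑ i, (if θ i then (1 : ℝ) else -1) * a i with hs
  -- key algebraic identity
  have key : ∀ φ : (Fin n → Bool) → ℝ,
      (∑ i, a i *
              ((1 / 2 ^ n : ℝ) * (∑ θ : Fin n → Bool, φ θ * (if θ i then 1 else 0))
               - (1 / 2 ^ n : ℝ) * (∑ θ : Fin n → Bool, φ θ * (if θ i then 0 else 1))))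
          - (∑ i, a i *
              ((1 / 2 ^ n : ℝ) * (∑ θ : Fin n → Bool, (1 - φ θ) * (if θ i then 1 else 0))
               - (1 / 2 ^ n : ℝ) * (∑ θ : Fin n → Bool, (1 - φ θ) * (if θ i then 0 else 1))))
      = (1 / 2 ^ n : ℝ) * ∑ θ : Fin n → Bool, (2 * φ θ - 1) * s θ := by
    intro φ
    rw [hs]
    simp only [Finset.mul_sum, Finset.sum_mul, mul_sub, ← Finset.sum_sub_distrib]
    rw [Finset.sum_comm]
    refine Finset.sum_congr rfl fun θ _ => Finset.sum_congr rfl fun i _ => ?_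
    cases h : θ i <;> simp [h] <;> ring
  -- involution
  have hneg : ∀ θ : Fin n → Bool, s (fun i => !θ i) = - s θ := by
    intro θ
    rw [hs, ← Finset.sum_neg_distrib]
    refine Finset.sum_congr rfl fun i _ => ?_
    by_cases h : θ i <;> simp [h]
  have hsum0 : ∑ θ : Fin n → Bool, Real.sign (s θ) = 0 := by
    have hbij : Function.Bijective (fun θ : Fin n → Bool => fun i => !θ i) :=
      Function.Involutive.bijective (fun θ => by funext i; simp)
    have h1 : ∑ θ : Fin n → Bool, Real.sign (s (fun i => !θ i))
        = ∑ θ : Fin n → Bool, Real.sign (s θ) :=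
      Fintype.sum_bijective _ hbij
        (fun θ => Real.sign (s (fun i => !θ i))) (fun θ => Real.sign (s θ))
        (fun x => rfl)
    have h2 : ∑ θ : Fin n → Bool, Real.sign (s (fun i => !θ i))
        = - ∑ θ : Fin n → Bool, Real.sign (s θ) := by
      rw [← Finset.sum_neg_distrib]
      exact Finset.sum_congr rfl fun θ _ => by rw [hneg, Real.sign_neg]
    linarith [h1.symm.trans h2]
  constructor
  · refine ⟨fun θ => (1 + Real.sign (s θ)) / 2, ?_, ?_, ?_⟩
    · intro θ
      rcases Real.sign_apply_eq (s θ) with h | h | h <;>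
        simp only [Set.mem_Icc, h] <;> norm_num
    · have : ∑ θ : Fin n → Bool, (1 + Real.sign (s θ)) / 2
          = (2 ^ n + ∑ θ : Fin n → Bool, Real.sign (s θ)) / 2 := by
        rw [← Finset.sum_div, Finset.sum_add_distrib, Finset.sum_const]
        simp [Finset.card_univ]
      rw [this, hsum0]
      field_simp
      ring
    · rw [key]
      congr 1
      refine Finset.sum_congr rfl fun θ _ => ?_
      have : 2 * ((1 + Real.sign (s θ)) / 2) - 1 = Real.sign (s θ) := by ring
      rw [this]
      rcases lt_trichotomy (s θ) 0 with h | h | h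
      · rw [abs_of_neg h, Real.sign_of_neg h]; ring
      · rw [h, Real.sign_zero, zero_mul]; exact abs_eq_zero.mpr h
      · rw [abs_of_pos h, Real.sign_of_pos h]; ring
  · rintro v ⟨φ, hφ, -, rfl⟩
    rw [key]
    have hc : (0:ℝ) ≤ 1 / 2 ^ n := by positivity
    refine mul_le_mul_of_nonneg_left (Finset.sum_le_sum fun θ _ => ?_) hc
    have h1 : |2 * φ θ - 1| ≤ 1 := by
      rcases hφ θ with ⟨h0, h2⟩
      rw [abs_le]; constructor <;> linarith
    calc (2 * φ θ - 1) * s θ ≤ |(2 * φ θ - 1) * s θ| := le_abs_self _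
      _ = |2 * φ θ - 1| * |s θ| := abs_mul _ _
      _ ≤ 1 * |s θ| := mul_le_mul_of_nonneg_right h1 (abs_nonneg _)
      _ = |s θ| := one_mul _
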